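/- arXiv:1907.01479 — 2 statements merged into one kernel-verified Lean document; each statement's English description precedes it below -/
import Mathlib

section
/- The N/2 two-sample shifts {ψ0[·−2l] : l = 0,…,N/2−1} of the first-level discrete-spline wavelet packet ψ0 of order 2r form an orthonormal system in Π[N]: for all l, p ∈ {0,…,N/2−1}, ⟨ψ0[·−2l], ψ0[·−2p]⟩ = δ[l−p]. -/
open Finset

noncomputable def omegaN (N : ℕ) : ℂ := Complex.exp (2 * Real.pi * Complex.I / N)

noncomputable def U4r (N r : ℕ) (n : ℤ) : ℝ :=
  ((Real.cos (Real.pi * n / N)) ^ (4 * r) + (Real.sin (Real.pi * n / N)) ^ (4 * r)) / 2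

noncomputable def betaF (N r : ℕ) (n : ℤ) : ℂ :=
  Complex.ofReal ((Real.cos (Real.pi * n / N)) ^ (2 * r) / Real.sqrt (U4r N r n))

noncomputable def alphaF (N r : ℕ) (n : ℤ) : ℂ :=
  omegaN N ^ n * Complex.ofReal ((Real.sin (Real.pi * n / N)) ^ (2 * r) / Real.sqrt (U4r N r n))

noncomputable def psi0 (N r : ℕ) (k : ℤ) : ℂ :=
  (N : ℂ)⁻¹ * ∑ n ∈ Finset.range N, omegaN N ^ (k * (n : ℤ)) * betaF N r n

noncomputable def psi1 (N r : ℕ) (k : ℤ) : ℂ :=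
  (N : ℂ)⁻¹ * ∑ n ∈ Finset.range N, omegaN N ^ (k * (n : ℤ)) * alphaF N r n

noncomputable def ip (N : ℕ) (x y : ℤ → ℂ) : ℂ :=
  ∑ k ∈ Finset.range N, x k * (starRingEnd ℂ) (y k)

/- ### auxiliary lemmas -/

lemma omega_ne_zero (N : ℕ) : omegaN N ≠ 0 := Complex.exp_ne_zero _

lemma omega_prim (N : ℕ) (hN : N ≠ 0) : IsPrimitiveRoot (omegaN N) N :=
  Complex.isPrimitiveRoot_exp N hN

lemma omega_zpow_eq_one (N : ℕ) (hN : N ≠ 0) (a : ℤ) :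
    omegaN N ^ a = 1 ↔ (N : ℤ) ∣ a :=
  (omega_prim N hN).zpow_eq_one_iff_dvd a

lemma dft_orth (N : ℕ) (hN : N ≠ 0) (a : ℤ) :
    ∑ k ∈ range N, omegaN N ^ ((k : ℤ) * a) = if (N : ℤ) ∣ a then (N : ℂ) else 0 := by
  have hsum : ∀ k ∈ range N, omegaN N ^ ((k : ℤ) * a) = (omegaN N ^ a) ^ k := by
    intro k _
    rw [mul_comm, zpow_mul, zpow_natCast]
  rw [Finset.sum_congr rfl hsum]
  by_cases hd : (N : ℤ) ∣ a
  · rw [if_pos hd]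
    have : omegaN N ^ a = 1 := (omega_zpow_eq_one N hN a).2 hd
    simp [this]
  · rw [if_neg hd]
    have hne : omegaN N ^ a ≠ 1 := fun h => hd ((omega_zpow_eq_one N hN a).1 h)
    rw [geom_sum_eq hne]
    have : (omegaN N ^ a) ^ N = 1 := by
      rw [← zpow_natCast, ← zpow_mul, mul_comm, zpow_mul, zpow_natCast,
        (omega_prim N hN).pow_eq_one, one_zpow]
    simp [this]

lemma conj_omega_zpow (N : ℕ) (z : ℤ) :
    (starRingEnd ℂ) (omegaN N ^ z) = omegaN N ^ (-z) := by
  have habs : ‖omegaN N‖ = 1 := by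
    unfold omegaN
    rw [show (2 * Real.pi * Complex.I / N) = ((2 * Real.pi / N : ℝ) : ℂ) * Complex.I by
      push_cast; ring]
    exact Complex.norm_exp_ofReal_mul_I _
  have hconj : (starRingEnd ℂ) (omegaN N) = (omegaN N)⁻¹ := by
    rw [Complex.inv_def]
    simp [Complex.normSq_eq_norm_sq, habs]
  rw [map_zpow₀, hconj, inv_zpow, ← zpow_neg]

lemma conj_betaF (N r : ℕ) (n : ℤ) :
    (starRingEnd ℂ) (betaF N r n) = betaF N r n := Complex.conj_ofReal _

lemma U_pos (N r : ℕ) (hr : 1 ≤ r) (n : ℤ) : 0 < U4r N r n := by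
  unfold U4r
  set x := Real.pi * n / N
  have hcs : Real.cos x ^ 2 + Real.sin x ^ 2 = 1 := by
    rw [add_comm]; exact Real.sin_sq_add_cos_sq x
  have h4 : 4 * r ≠ 0 := by positivity
  have hc : (0:ℝ) ≤ Real.cos x ^ (4 * r) := by
    have : Real.cos x ^ (4*r) = (Real.cos x ^ 2) ^ (2*r) := by rw [← pow_mul]; ring_nf
    rw [this]; positivity
  have hs : (0:ℝ) ≤ Real.sin x ^ (4 * r) := by
    have : Real.sin x ^ (4*r) = (Real.sin x ^ 2) ^ (2*r) := by rw [← pow_mul]; ring_nf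
    rw [this]; positivity
  have : Real.cos x ^ (4*r) + Real.sin x ^ (4*r) ≠ 0 := by
    intro h
    have hc0 : Real.cos x = 0 := by
      have := (add_eq_zero_iff_of_nonneg hc hs).1 h
      exact pow_eq_zero_iff h4 |>.1 this.1
    have hs0 : Real.sin x = 0 := by
      have := (add_eq_zero_iff_of_nonneg hc hs).1 h
      exact pow_eq_zero_iff h4 |>.1 this.2
    rw [hc0, hs0] at hcs; norm_num at hcs
  have := lt_of_le_of_ne (by linarith) (Ne.symm this)
  linarith

lemma beta_sq (N r : ℕ) (hr : 1 ≤ r) (n : ℤ) :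
    betaF N r n * betaF N r n =
      Complex.ofReal ((Real.cos (Real.pi * n / N)) ^ (4 * r) / U4r N r n) := by
  have hU := U_pos N r hr n
  unfold betaF
  rw [← Complex.ofReal_mul]
  congr 1
  rw [div_mul_div_comm, ← pow_add, Real.mul_self_sqrt hU.le]
  congr 2
  ring

lemma arg_shift (N : ℕ) (hN2 : N / 2 * 2 = N) (hN0 : N ≠ 0) (n : ℤ) :
    Real.pi * ((n + (N / 2 : ℕ) : ℤ) : ℝ) / N = Real.pi * n / N + Real.pi / 2 := by
  set M := N / 2 with hMdef
  have hM : ((M : ℕ) : ℝ) * 2 = (N : ℝ) := by exact_mod_cast congrArg (Nat.cast : ℕ → ℝ) hN2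
  have hM0 : ((M : ℕ) : ℝ) ≠ 0 := by
    intro h; rw [h] at hM; simp at hM; exact hN0 (by exact_mod_cast hM.symm)
  rw [← hM]
  push_cast
  field_simp

lemma beta_pair (N r : ℕ) (hr : 1 ≤ r) (hN2 : N / 2 * 2 = N) (hN0 : N ≠ 0) (n : ℤ) :
    betaF N r n * betaF N r n +
      betaF N r (n + (N / 2 : ℕ)) * betaF N r (n + (N / 2 : ℕ)) = 2 := by
  have hU := U_pos N r hr n
  have harg := arg_shift N hN2 hN0 n
  have hUsh : U4r N r (n + (N / 2 : ℕ)) = U4r N r n := by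
    unfold U4r
    rw [harg, Real.cos_add_pi_div_two, Real.sin_add_pi_div_two]
    rw [Even.neg_pow ⟨2 * r, by ring⟩, add_comm]
  rw [beta_sq N r hr n, beta_sq N r hr _, hUsh, harg, Real.cos_add_pi_div_two]
  rw [Even.neg_pow ⟨2 * r, by ring⟩, ← Complex.ofReal_add, ← add_div]
  have : (Real.cos (Real.pi * n / N) ^ (4 * r) + Real.sin (Real.pi * n / N) ^ (4 * r)) / U4r N r n = 2 := by
    have h2 : Real.cos (Real.pi * n / N) ^ (4 * r) + Real.sin (Real.pi * n / N) ^ (4 * r) =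
        2 * U4r N r n := by unfold U4r; ring
    rw [h2, mul_div_assoc, div_self hU.ne', mul_one]
  rw [this]; norm_num

theorem stmt_0 (j r : ℕ) (hj : 3 ≤ j) (hr : 1 ≤ r) (N : ℕ) (hN : N = 2 ^ j)
    (l p : ℕ) (hl : l < N / 2) (hp : p < N / 2) :
    ip N (fun k => psi0 N r (k - 2 * (l : ℤ))) (fun k => psi0 N r (k - 2 * (p : ℤ))) =
      if l = p then 1 else 0 := by
  have hN0 : N ≠ 0 := by rw [hN]; positivity
  have hN2 : N / 2 * 2 = N := by
    have h2 : 2 ∣ N := by rw [hN]; exact dvd_pow_self 2 (by omega)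
    omega
  set ω := omegaN N with hω
  have hω0 : ω ≠ 0 := omega_ne_zero N
  have hNC : (N : ℂ) ≠ 0 := Nat.cast_ne_zero.2 hN0
  -- Step A : reduce to a single Fourier-side sum
  have stepA : ip N (fun k => psi0 N r (k - 2 * (l : ℤ))) (fun k => psi0 N r (k - 2 * (p : ℤ)))
      = (N : ℂ)⁻¹ * ∑ n ∈ range N,
          betaF N r n * betaF N r n * ω ^ ((2 * (p : ℤ) - 2 * l) * n) := by
    unfold ip psi0
    have hconjc : (starRingEnd ℂ) (N : ℂ)⁻¹ = (N : ℂ)⁻¹ := by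
      rw [map_inv₀, Complex.conj_natCast]
    -- expand each k-term
    have hterm : ∀ k : ℕ,
        ((N : ℂ)⁻¹ * ∑ n ∈ range N, ω ^ (((k : ℤ) - 2 * l) * n) * betaF N r n) *
          (starRingEnd ℂ) ((N : ℂ)⁻¹ * ∑ m ∈ range N, ω ^ (((k : ℤ) - 2 * p) * m) * betaF N r m)
        = (N : ℂ)⁻¹ * (N : ℂ)⁻¹ * ∑ n ∈ range N, ∑ m ∈ range N,
            (betaF N r n * betaF N r m * ω ^ ((2 * (p : ℤ)) * m - (2 * l) * n)) *
              ω ^ ((k : ℤ) * ((n : ℤ) - m)) := by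
      intro k
      rw [map_mul, hconjc, map_sum]
      have hc : ∀ m ∈ range N,
          (starRingEnd ℂ) (ω ^ (((k : ℤ) - 2 * p) * m) * betaF N r m)
            = ω ^ (-(((k : ℤ) - 2 * p) * m)) * betaF N r m := by
        intro m _
        rw [map_mul, conj_omega_zpow, conj_betaF]
      rw [Finset.sum_congr rfl hc]
      rw [mul_mul_mul_comm, Finset.sum_mul_sum]
      congr 1
      apply Finset.sum_congr rfl; intro n _
      apply Finset.sum_congr rfl; intro m _
      calc ω ^ (((k : ℤ) - 2 * l) * n) * betaF N r n *
            (ω ^ (-(((k : ℤ) - 2 * p) * m)) * betaF N r m)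
          = betaF N r n * betaF N r m *
              (ω ^ (((k : ℤ) - 2 * l) * n) * ω ^ (-(((k : ℤ) - 2 * p) * m))) := by ring
        _ = betaF N r n * betaF N r m *
              ω ^ ((((k : ℤ) - 2 * l) * n) + -(((k : ℤ) - 2 * p) * m)) := by
            rw [zpow_add₀ hω0]
        _ = betaF N r n * betaF N r m *
              ω ^ (((2 * (p : ℤ)) * m - (2 * l) * n) + (k : ℤ) * ((n : ℤ) - m)) := by
            congr 1; ring_nf
        _ = (betaF N r n * betaF N r m * ω ^ ((2 * (p : ℤ)) * m - (2 * l) * n)) *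
              ω ^ ((k : ℤ) * ((n : ℤ) - m)) := by
            rw [zpow_add₀ hω0]; ring
    rw [Finset.sum_congr rfl (fun k _ => hterm k)]
    rw [← Finset.mul_sum, Finset.sum_comm]
    have hswap : ∀ n ∈ range N,
        ∑ k ∈ range N, ∑ m ∈ range N,
            (betaF N r n * betaF N r m * ω ^ ((2 * (p : ℤ)) * m - (2 * l) * n)) *
              ω ^ ((k : ℤ) * ((n : ℤ) - m))
        = betaF N r n * betaF N r n * ω ^ ((2 * (p : ℤ)) * n - (2 * l) * n) * N := by
      intro n hn
      rw [Finset.sum_comm]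
      have hinner : ∀ m ∈ range N,
          ∑ k ∈ range N,
            (betaF N r n * betaF N r m * ω ^ ((2 * (p : ℤ)) * m - (2 * l) * n)) *
              ω ^ ((k : ℤ) * ((n : ℤ) - m))
          = if m = n then betaF N r n * betaF N r m *
              ω ^ ((2 * (p : ℤ)) * m - (2 * l) * n) * N else 0 := by
        intro m hm
        rw [← Finset.mul_sum, dft_orth N hN0 ((n : ℤ) - m)]
        have hiff : ((N : ℤ) ∣ ((n : ℤ) - m)) ↔ m = n := by
          constructor
          · intro hd
            have hn' := Finset.mem_range.1 hn
            have hm' := Finset.mem_range.1 hm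
            have habs : |(n : ℤ) - m| < (N : ℤ) := abs_lt.2 ⟨by omega, by omega⟩
            have := Int.eq_zero_of_abs_lt_dvd hd habs
            omega
          · rintro rfl; simp
        by_cases hmn : m = n
        · rw [if_pos hmn, if_pos (hiff.2 hmn)]
        · rw [if_neg hmn, if_neg (fun h => hmn (hiff.1 h)), mul_zero]
      rw [Finset.sum_congr rfl hinner, Finset.sum_ite_eq' (range N) n
        (fun m => betaF N r n * betaF N r m * ω ^ ((2 * (p : ℤ)) * m - (2 * l) * n) * N),
        if_pos hn]
    rw [Finset.sum_congr rfl hswap]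
    have : (N : ℂ)⁻¹ * (N : ℂ)⁻¹ *
        ∑ n ∈ range N, betaF N r n * betaF N r n * ω ^ ((2 * (p : ℤ)) * n - (2 * l) * n) * N
        = (N : ℂ)⁻¹ * ∑ n ∈ range N,
            betaF N r n * betaF N r n * ω ^ ((2 * (p : ℤ)) * n - (2 * l) * n) := by
      rw [← Finset.sum_mul]
      field_simp
    rw [this]
    congr 1
    apply Finset.sum_congr rfl; intro n _
    congr 2
    ring
  rw [stepA]
  -- Step B : fold the sum over the two half-ranges
  set m0 : ℤ := (p : ℤ) - l with hm0
  have hexp : ∀ n : ℕ, (2 * (p : ℤ) - 2 * l) * n = 2 * m0 * n := by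
    intro n; rw [hm0]; ring
  have hNsplit : N = N / 2 + N / 2 := by omega
  have hfold : ∑ n ∈ range N, betaF N r n * betaF N r n * ω ^ ((2 * (p : ℤ) - 2 * l) * n)
      = 2 * ∑ n ∈ range (N / 2), (ω ^ (2 * m0)) ^ n := by
    rw [show range N = range (N / 2 + N / 2) from by rw [← hNsplit]]
    rw [Finset.sum_range_add, ← Finset.sum_add_distrib, Finset.mul_sum]
    apply Finset.sum_congr rfl
    intro n _
    have hcast : ((N / 2 + n : ℕ) : ℤ) = (n : ℤ) + (N / 2 : ℕ) := by push_cast; ring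
    rw [hcast]
    have homega : ω ^ ((2 * (p : ℤ) - 2 * l) * ((n : ℤ) + (N / 2 : ℕ)))
        = ω ^ ((2 * (p : ℤ) - 2 * l) * n) := by
      rw [show (2 * (p : ℤ) - 2 * l) * ((n : ℤ) + (N / 2 : ℕ))
          = (2 * (p : ℤ) - 2 * l) * n + m0 * (((N / 2 : ℕ) : ℤ) * 2) by rw [hm0]; ring]
      rw [zpow_add₀ hω0]
      have hNZ : ((N / 2 : ℕ) : ℤ) * 2 = (N : ℤ) := by exact_mod_cast hN2
      rw [hNZ]
      have : ω ^ (m0 * (N : ℤ)) = 1 :=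
        (omega_zpow_eq_one N hN0 _).2 ⟨m0, by ring⟩
      rw [this, mul_one]
    rw [homega, ← add_mul, beta_pair N r hr hN2 hN0 n]
    rw [hexp n, ← zpow_natCast (ω ^ (2 * m0)) n, ← zpow_mul]
  rw [hfold]
  -- Step C : the geometric sum
  by_cases hlp : l = p
  · have : m0 = 0 := by rw [hm0, hlp]; ring
    rw [if_pos hlp, this]
    simp only [mul_zero, zpow_zero, one_pow, Finset.sum_const, card_range, nsmul_eq_mul,
      mul_one]
    have hcast : ((N / 2 : ℕ) : ℂ) * 2 = (N : ℂ) := by exact_mod_cast hN2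
    field_simp
    linear_combination hcast
  · rw [if_neg hlp]
    have hm0ne : m0 ≠ 0 := by
      intro h; rw [hm0] at h; apply hlp; omega
    have hznot : ω ^ (2 * m0) ≠ 1 := by
      intro h
      have hd := (omega_zpow_eq_one N hN0 _).1 h
      have habs : |2 * m0| < (N : ℤ) := by
        rw [hm0, abs_lt]
        constructor <;> omega
      have := Int.eq_zero_of_abs_lt_dvd hd habs
      exact hm0ne (by omega)
    rw [geom_sum_eq hznot]
    have hzpow : (ω ^ (2 * m0)) ^ (N / 2) = 1 := by
      rw [← zpow_natCast, ← zpow_mul]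
      apply (omega_zpow_eq_one N hN0 _).2
      refine ⟨m0, ?_⟩
      have hNZ : ((N / 2 : ℕ) : ℤ) * 2 = (N : ℤ) := by exact_mod_cast hN2
      rw [← hNZ]; ring
    rw [hzpow]
    simp
end

section
/- For every integer n, the analysis modulation matrix M̃[n] = [[β[n], β[n+N/2]], [α[n], α[n+N/2]]] satisfies: M̃[n]/√2 is a unitary 2×2 complex matrix; equivalently, |β[n]|² + |β[n+N/2]|² = 2, |α[n]|² + |α[n+N/2]|² = 2, and β[n]·conj(α[n]) + β[n+N/2]·conj(α[n+N/2]) = 0. -/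
open Finset

lemma U4r_pos (N r : ℕ) (n : ℤ) : 0 < U4r N r n := by
  unfold U4r
  have h := Real.sin_sq_add_cos_sq (Real.pi * n / N)
  rcases eq_or_ne (Real.cos (Real.pi * n / N)) 0 with hc | hc
  · have hs : Real.sin (Real.pi * n / N) ≠ 0 := by
      intro hs; rw [hs, hc] at h; norm_num at h
    have h1 : 0 < Real.sin (Real.pi * n / N) ^ (4 * r) := by
      have hne := pow_ne_zero (4 * r) hs
      have hnn : 0 ≤ Real.sin (Real.pi * n / N) ^ (4 * r) := by
        rw [show 4 * r = 2 * (2 * r) by ring, pow_mul]; positivity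
      exact hnn.lt_of_ne (Ne.symm hne)
    have h2 : 0 ≤ Real.cos (Real.pi * n / N) ^ (4 * r) := by
      rw [show 4 * r = 2 * (2 * r) by ring, pow_mul]; positivity
    linarith
  · have h1 : 0 < Real.cos (Real.pi * n / N) ^ (4 * r) := by
      have hne := pow_ne_zero (4 * r) hc
      have hnn : 0 ≤ Real.cos (Real.pi * n / N) ^ (4 * r) := by
        rw [show 4 * r = 2 * (2 * r) by ring, pow_mul]; positivity
      exact hnn.lt_of_ne (Ne.symm hne)
    have h2 : 0 ≤ Real.sin (Real.pi * n / N) ^ (4 * r) := by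
      rw [show 4 * r = 2 * (2 * r) by ring, pow_mul]; positivity
    linarith

/-- The analysis modulation matrix M̃[n] divided by √2 is unitary;
equivalently the rows of M̃[n] have squared norm 2 and are orthogonal. -/
theorem stmt_2 (j r : ℕ) (hj : 3 ≤ j) (hr : 1 ≤ r) (N : ℕ) (hN : N = 2 ^ j) (n : ℤ) :
    ((Real.sqrt 2 : ℂ)⁻¹ •
        !![betaF N r n, betaF N r (n + ((N / 2 : ℕ) : ℤ));
           alphaF N r n, alphaF N r (n + ((N / 2 : ℕ) : ℤ))] ∈
      Matrix.unitaryGroup (Fin 2) ℂ) ∧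
    ‖betaF N r n‖ ^ 2 + ‖betaF N r (n + ((N / 2 : ℕ) : ℤ))‖ ^ 2 = 2 ∧
    ‖alphaF N r n‖ ^ 2 + ‖alphaF N r (n + ((N / 2 : ℕ) : ℤ))‖ ^ 2 = 2 ∧
    betaF N r n * (starRingEnd ℂ) (alphaF N r n) +
      betaF N r (n + ((N / 2 : ℕ) : ℤ)) * (starRingEnd ℂ) (alphaF N r (n + ((N / 2 : ℕ) : ℤ))) =
        0 := by
  obtain ⟨m, rfl⟩ : ∃ m, j = m + 1 := ⟨j - 1, by omega⟩
  have hN2 : (N / 2 : ℕ) = 2 ^ m := by subst hN; rw [pow_succ, Nat.mul_div_cancel _ (by norm_num)]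
  have hNm : (N : ℝ) = 2 ^ (m + 1) := by rw [hN]; push_cast; ring
  have h2R : ((2:ℝ)) ^ (m+1) ≠ 0 := by positivity
  -- angle shift
  have hang : Real.pi * ((n + ((N / 2 : ℕ) : ℤ)) : ℤ) / (N : ℝ) = Real.pi * n / N + Real.pi / 2 := by
    rw [hN2, hNm]; push_cast; field_simp; ring
  set c := Real.cos (Real.pi * (n : ℝ) / (N : ℝ)) with hcdef
  set s := Real.sin (Real.pi * (n : ℝ) / (N : ℝ)) with hsdef
  have hU : 0 < U4r N r n := U4r_pos N r n
  set u := Real.sqrt (U4r N r n) with hudef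
  have hu0 : 0 < u := Real.sqrt_pos.mpr hU
  have hcos : Real.cos (Real.pi * ((n + ((N / 2 : ℕ) : ℤ)) : ℤ) / (N : ℝ)) = -s := by
    rw [hang, Real.cos_add_pi_div_two]
  have hsin : Real.sin (Real.pi * ((n + ((N / 2 : ℕ) : ℤ)) : ℤ) / (N : ℝ)) = c := by
    rw [hang, Real.sin_add_pi_div_two]
  have hUeq : U4r N r (n + ((N / 2 : ℕ) : ℤ)) = U4r N r n := by
    unfold U4r
    rw [hcos, hsin, show ((-s : ℝ)) ^ (4 * r) = s ^ (4 * r) from Even.neg_pow ⟨2 * r, by ring⟩ s]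
    rw [← hcdef, ← hsdef]; ring
  -- explicit forms
  have hβn : betaF N r n = ((c ^ (2 * r) / u : ℝ) : ℂ) := rfl
  have hαn : alphaF N r n = omegaN N ^ n * ((s ^ (2 * r) / u : ℝ) : ℂ) := rfl
  have hβ' : betaF N r (n + ((N / 2 : ℕ) : ℤ)) = ((s ^ (2 * r) / u : ℝ) : ℂ) := by
    unfold betaF
    rw [hcos, hUeq, show ((-s : ℝ)) ^ (2 * r) = s ^ (2 * r) from Even.neg_pow ⟨r, by ring⟩ s,
      ← hudef]
  have hω : omegaN N ^ (((N / 2 : ℕ) : ℤ)) = -1 := by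
    rw [hN2, zpow_natCast]
    unfold omegaN
    rw [← Complex.exp_nat_mul]
    rw [show ((2^m : ℕ) : ℂ) * (2 * ↑Real.pi * Complex.I / (N:ℂ)) = ↑Real.pi * Complex.I by
      have hNC : (N : ℂ) = 2 ^ (m+1) := by rw [hN]; push_cast; ring
      rw [hNC]
      have h2C : ((2:ℂ)) ^ (m+1) ≠ 0 := pow_ne_zero _ two_ne_zero
      push_cast
      field_simp
      ring]
    exact Complex.exp_pi_mul_I
  have hωne : omegaN N ≠ 0 := Complex.exp_ne_zero _
  have hα' : alphaF N r (n + ((N / 2 : ℕ) : ℤ)) =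
      -(omegaN N ^ n) * ((c ^ (2 * r) / u : ℝ) : ℂ) := by
    unfold alphaF
    rw [hsin, hUeq, ← hudef, zpow_add₀ hωne, hω]
    ring
  have habsω : ‖omegaN N ^ n‖ = 1 := by
    have h1 : ‖omegaN N‖ = 1 := by
      unfold omegaN
      rw [show (2 * (Real.pi:ℂ) * Complex.I / (N:ℂ)) = ((2 * Real.pi / N : ℝ) : ℂ) * Complex.I by
        push_cast; ring]
      exact Complex.norm_exp_ofReal_mul_I _
    rw [norm_zpow, h1, one_zpow]
  set n2 : ℤ := n + ((N / 2 : ℕ) : ℤ) with hn2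
  -- square sums
  have husq : u ^ 2 = U4r N r n := Real.sq_sqrt hU.le
  have hsum : c ^ (4 * r) + s ^ (4 * r) = 2 * U4r N r n := by
    unfold U4r; rw [← hcdef, ← hsdef]; ring
  have hkey : (c ^ (2 * r) / u) ^ 2 + (s ^ (2 * r) / u) ^ 2 = 2 := by
    rw [div_pow, div_pow, husq, ← pow_mul, ← pow_mul, show 2 * r * 2 = 4 * r by ring,
      ← add_div, hsum, mul_div_assoc, div_self hU.ne', mul_one]
  have h1 : ‖betaF N r n‖ ^ 2 + ‖betaF N r (n + ((N / 2 : ℕ) : ℤ))‖ ^ 2 = 2 := by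
    rw [hβn, hβ', Complex.norm_real, Complex.norm_real, Real.norm_eq_abs, Real.norm_eq_abs, sq_abs, sq_abs, hkey]
  have h2 : ‖alphaF N r n‖ ^ 2 + ‖alphaF N r (n + ((N / 2 : ℕ) : ℤ))‖ ^ 2 = 2 := by
    rw [hαn, hα', norm_mul, norm_mul, habsω, norm_neg, habsω, one_mul, one_mul,
      Complex.norm_real, Complex.norm_real, Real.norm_eq_abs, Real.norm_eq_abs, sq_abs, sq_abs, add_comm, hkey]
  have h3 : betaF N r n * (starRingEnd ℂ) (alphaF N r n) +
      betaF N r (n + ((N / 2 : ℕ) : ℤ)) * (starRingEnd ℂ) (alphaF N r (n + ((N / 2 : ℕ) : ℤ))) = 0 := by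
    rw [hβn, hαn, hβ', hα']
    simp only [map_mul, map_neg, Complex.conj_ofReal]
    ring
  refine ⟨?_, h1, h2, h3⟩
  rw [Matrix.mem_unitaryGroup_iff]
  have hmc : ∀ z : ℂ, z * (starRingEnd ℂ) z = ((‖z‖ ^ 2 : ℝ) : ℂ) := by
    intro z; rw [Complex.mul_conj, Complex.normSq_eq_norm_sq]
  have hmul : (Real.sqrt 2 : ℂ) * (Real.sqrt 2 : ℂ) = 2 := by
    norm_cast
    rw [Real.mul_self_sqrt (by norm_num : (0:ℝ) ≤ 2)]
  set A : Matrix (Fin 2) (Fin 2) ℂ :=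
    !![betaF N r n, betaF N r (n + ((N / 2 : ℕ) : ℤ));
       alphaF N r n, alphaF N r (n + ((N / 2 : ℕ) : ℤ))] with hA
  have hAA : A * star A = (2 : ℂ) • (1 : Matrix (Fin 2) (Fin 2) ℂ) := by
    have h3' : alphaF N r n * (starRingEnd ℂ) (betaF N r n) +
        alphaF N r (n + ((N / 2 : ℕ) : ℤ)) * (starRingEnd ℂ) (betaF N r (n + ((N / 2 : ℕ) : ℤ))) = 0 := by
      have := congrArg (starRingEnd ℂ) h3
      simpa [mul_comm] using this
    ext i k
    fin_cases i <;> fin_cases k <;>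
      simp only [hA, Matrix.mul_apply, Fin.sum_univ_two, Matrix.conjTranspose_apply,
        Matrix.star_eq_conjTranspose, Matrix.smul_apply, Matrix.one_apply,
        Matrix.cons_val_zero, Matrix.cons_val_one, Matrix.head_cons, Matrix.head_fin_const,
        Matrix.cons_val', Matrix.empty_val', Matrix.cons_val_fin_one, smul_eq_mul,
        Fin.mk_zero, Fin.mk_one, Fin.isValue, Complex.star_def, if_true, mul_one]
    · simp only [Matrix.of_apply, Matrix.cons_val', Matrix.cons_val_zero, Matrix.cons_val_one,
        Matrix.head_cons, Matrix.empty_val', Matrix.cons_val_fin_one, Matrix.head_fin_const]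
      rw [hmc, hmc, ← Complex.ofReal_add, h1]; norm_num
    · simp only [Matrix.of_apply, Matrix.cons_val', Matrix.cons_val_zero, Matrix.cons_val_one,
        Matrix.head_cons, Matrix.empty_val', Matrix.cons_val_fin_one, Matrix.head_fin_const]
      rw [h3]; norm_num
    · simp only [Matrix.of_apply, Matrix.cons_val', Matrix.cons_val_zero, Matrix.cons_val_one,
        Matrix.head_cons, Matrix.empty_val', Matrix.cons_val_fin_one, Matrix.head_fin_const]
      rw [h3']; norm_num
    · simp only [Matrix.of_apply, Matrix.cons_val', Matrix.cons_val_zero, Matrix.cons_val_one,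
        Matrix.head_cons, Matrix.empty_val', Matrix.cons_val_fin_one, Matrix.head_fin_const]
      rw [hmc, hmc, ← Complex.ofReal_add, h2]; norm_num
  have hstar : star ((Real.sqrt 2 : ℂ))⁻¹ = ((Real.sqrt 2 : ℂ))⁻¹ := by
    simp [Complex.star_def, Complex.conj_ofReal]
  rw [star_smul, Matrix.smul_mul, Matrix.mul_smul, hAA, smul_smul, smul_smul, hstar]
  rw [show (Real.sqrt 2 : ℂ)⁻¹ * (Real.sqrt 2 : ℂ)⁻¹ * (2:ℂ) = 1 by
    have h0 : (Real.sqrt 2 : ℂ) ≠ 0 := by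
      intro h
      apply (by positivity : (0:ℝ) < Real.sqrt 2).ne'
      exact_mod_cast h
    rw [← mul_inv, hmul]
    norm_num]
  exact one_smul _ _
end
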